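/- Let G = (V,E) be a connected graph whose superstructure corresponds to an additive PL instance with per-arc scores f: for every directed DAG D on V whose skeleton is a forest (a polytree), the score Σ_{ab∈A(D)} f_b(a) is at most Σ_{e={a,b} ∈ E(T*)} max(f_a(b), f_b(a)), where T* is a maximum spanning tree of G with edge weights w({a,b}) = max(f_a(b), f_b(a)); moreover this bound is attained by some polytree. -/

import Mathlib

open SimpleGraph

/-- Total weight of (the edges of) a graph. -/
noncomputable def treeWeight {V : Type*} (T : SimpleGraph V) (w : Sym2 V → ℕ) : ℕ :=
  ∑ᶠ e ∈ T.edgeSet, w e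

/-- Score of the polytree with arc relation `B`: the sum over arcs `ab`
of the per-arc score `f b a` (the score of `b` for taking `a` as a parent). -/
noncomputable def polyScore {V : Type*} (B : V → V → Prop) (f : V → V → ℕ) : ℕ :=
  ∑ᶠ p ∈ {p : V × V | B p.1 p.2}, f p.2 p.1

/-- Acyclicity is monotone downwards. -/
lemma myIsAcyclic.mono {V : Type*} {H K : SimpleGraph V} (h : H ≤ K) (hK : K.IsAcyclic) :
    H.IsAcyclic := fun _v c hc => hK (c.mapLe h) (hc.mapLe h)

/-- Adding an edge between two components of an acyclic graph keeps it acyclic. -/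
lemma mySupEdgeAcyclic {V : Type*} {T : SimpleGraph V} (hT : T.IsAcyclic) {a b : V}
    (h : ¬T.Reachable a b) : (T ⊔ SimpleGraph.edge a b).IsAcyclic := by
  have hab : a ≠ b := by rintro rfl; exact h (Reachable.refl a)
  intro v c hc
  by_cases he : s(a, b) ∈ c.edges
  · have hcyc : ∃ (u : V) (p : (T ⊔ SimpleGraph.edge a b).Walk u u),
        p.IsCycle ∧ s(a, b) ∈ p.edges := ⟨v, c, hc, he⟩
    have hr := (adj_and_reachable_delete_edges_iff_exists_cycle.2 hcyc).2
    refine h (hr.mono ?_)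
    intro x y hxy
    rw [deleteEdges_adj] at hxy
    rcases hxy with ⟨hxy1, hxy2⟩
    rcases hxy1 with h1 | h1
    · exact h1
    · exfalso
      apply hxy2
      rw [Set.mem_singleton_iff]
      rw [edge_adj] at h1
      rcases h1.1 with ⟨rfl, rfl⟩ | ⟨rfl, rfl⟩
      · rfl
      · exact Sym2.eq_swap
  · refine hT (c.transfer T ?_) (hc.transfer _)
    intro e hec
    have := c.edges_subset_edgeSet hec
    rw [edgeSet_sup] at this
    rcases this with h1 | h1
    · exact h1
    · exfalso
      rw [SimpleGraph.edge, edgeSet_fromEdgeSet] at h1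
      rcases h1 with ⟨h1, _⟩
      rw [Set.mem_singleton_iff] at h1
      subst h1
      exact he hec

/-- Along a walk joining vertices not reachable in `T`, some edge crosses components. -/
lemma myExistsCross {V : Type*} {G T : SimpleGraph V} {u v : V} (p : G.Walk u v) :
    ¬T.Reachable u v → ∃ a b, G.Adj a b ∧ ¬T.Reachable a b := by
  classical
  induction p with
  | nil => exact fun h => absurd (Reachable.refl _) h
  | @cons u x v hadj q ih =>
    intro h
    by_cases hr : T.Reachable u x
    · exact ih fun hx => h (hr.trans hx)
    · exact ⟨u, x, hadj, hr⟩

/-- Every forest contained in a connected graph extends to a spanning tree. -/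
lemma myExistsSpanning {V : Type*} [Finite V] {G F : SimpleGraph V} (hG : G.Connected)
    (hF : F ≤ G) (hFa : F.IsAcyclic) : ∃ T, F ≤ T ∧ T ≤ G ∧ T.IsTree := by
  obtain ⟨T, hFT, hTmax⟩ :=
    Finite.exists_le_maximal (p := fun H : SimpleGraph V => H ≤ G ∧ H.IsAcyclic) ⟨hF, hFa⟩
  refine ⟨T, hFT, hTmax.prop.1, ?_, hTmax.prop.2⟩
  have hne : Nonempty V := hG.nonempty
  rw [connected_iff]
  refine ⟨fun u v => ?_, hne⟩
  by_contra hnr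
  obtain ⟨a, b, hab, hnab⟩ := myExistsCross (hG.preconnected u v).some hnr
  have hEle : SimpleGraph.edge a b ≤ G := by
    intro x y hxy
    rw [edge_adj] at hxy
    rcases hxy.1 with ⟨rfl, rfl⟩ | ⟨rfl, rfl⟩
    · exact hab
    · exact hab.symm
  have hp : (T ⊔ SimpleGraph.edge a b) ≤ G ∧ (T ⊔ SimpleGraph.edge a b).IsAcyclic :=
    ⟨sup_le hTmax.prop.1 hEle, mySupEdgeAcyclic hTmax.prop.2 hnab⟩
  have hle : T ⊔ SimpleGraph.edge a b ≤ T := hTmax.2 hp le_sup_left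
  have hne' : a ≠ b := fun hh => hnab (hh ▸ Reachable.refl a)
  have hTadj : T.Adj a b :=
    hle ((sup_adj _ _ _ _).mpr (Or.inr ((edge_adj a b a b).mpr ⟨Or.inl ⟨rfl, rfl⟩, hne'⟩)))
  exact hnab hTadj.reachable

lemma myTreeWeight_eq {V : Type*} [Fintype V] (T : SimpleGraph V) (w : Sym2 V → ℕ)
    [DecidablePred (· ∈ T.edgeSet)] :
    treeWeight T w = ∑ e ∈ Finset.univ.filter (· ∈ T.edgeSet), w e := by
  rw [treeWeight, ← finsum_mem_coe_finset]
  congr 1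
  ext e
  simp

lemma myPolyScore_eq {V : Type*} [Fintype V] (B : V → V → Prop) (f : V → V → ℕ)
    [DecidablePred fun p : V × V => B p.1 p.2] :
    polyScore B f = ∑ p ∈ Finset.univ.filter (fun p : V × V => B p.1 p.2), f p.2 p.1 := by
  rw [polyScore, ← finsum_mem_coe_finset]
  congr 1
  ext p
  simp

lemma myInjOn {V : Type*} [Fintype V] {B : V → V → Prop} (hB : ∀ a b, B a b → ¬ B b a)
    [DecidablePred fun p : V × V => B p.1 p.2] :
    Set.InjOn (fun p : V × V => s(p.1, p.2))
      ↑(Finset.univ.filter (fun p : V × V => B p.1 p.2)) := by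
  rintro ⟨a, b⟩ hp ⟨c, d⟩ hq hpq
  simp only [Finset.coe_filter, Set.mem_setOf_eq] at hp hq
  simp only [Sym2.eq_iff] at hpq
  rcases hpq with ⟨rfl, rfl⟩ | ⟨rfl, rfl⟩
  · rfl
  · exact absurd hq.2 (hB _ _ hp.2)

lemma myImage_eq {V : Type*} [Fintype V] [DecidableEq V] (B : V → V → Prop)
    (hB : ∀ a b, B a b → ¬ B b a)
    [DecidablePred fun p : V × V => B p.1 p.2]
    [DecidablePred (· ∈ (SimpleGraph.fromRel B).edgeSet)] :
    (Finset.univ.filter (fun p : V × V => B p.1 p.2)).image (fun p => s(p.1, p.2)) =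
      Finset.univ.filter (· ∈ (SimpleGraph.fromRel B).edgeSet) := by
  ext e
  induction e with
  | _ x y =>
    simp only [Finset.mem_image, Finset.mem_filter, Finset.mem_univ, true_and,
      mem_edgeSet, fromRel_adj]
    constructor
    · rintro ⟨⟨a, b⟩, hab, hs⟩
      have hne : a ≠ b := fun hh => hB a b hab (hh ▸ hab)
      simp only [Sym2.eq_iff] at hs
      rcases hs with ⟨rfl, rfl⟩ | ⟨rfl, rfl⟩
      · exact ⟨hne, Or.inl hab⟩
      · exact ⟨hne.symm, Or.inr hab⟩
    · rintro ⟨hne, hxy | hyx⟩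
      · exact ⟨(x, y), hxy, rfl⟩
      · exact ⟨(y, x), hyx, Sym2.eq_swap⟩

theorem stmt9 {V : Type*} [Fintype V] (G : SimpleGraph V) (f : V → V → ℕ)
    (hG : G.Connected)
    (hf : ∀ a b : V, ¬ G.Adj a b → f b a = 0)
    (w : Sym2 V → ℕ)
    (hw : ∀ a b : V, w (s(a, b)) = max (f a b) (f b a))
    (Tstar : SimpleGraph V) (hT : Tstar ≤ G) (hTree : Tstar.IsTree)
    (hmax : ∀ T : SimpleGraph V, T ≤ G → T.IsTree →
      treeWeight T w ≤ treeWeight Tstar w) :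
    (∀ B : V → V → Prop, (∀ a b, B a b → ¬ B b a) →
        (SimpleGraph.fromRel B).IsAcyclic →
        polyScore B f ≤ treeWeight Tstar w) ∧
      ∃ B : V → V → Prop, (∀ a b, B a b → ¬ B b a) ∧
        (SimpleGraph.fromRel B).IsAcyclic ∧
        polyScore B f = treeWeight Tstar w := by
  classical
  constructor
  · -- upper bound
    intro B hB hAc
    set B' : V → V → Prop := fun a b => B a b ∧ G.Adj a b with hB'def
    have hB' : ∀ a b, B' a b → ¬ B' b a := fun a b h1 h2 => hB a b h1.1 h2.1
    set F : SimpleGraph V := SimpleGraph.fromRel B' with hFdef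
    have hFle : F ≤ G := by
      intro x y hxy
      rw [hFdef, fromRel_adj] at hxy
      rcases hxy.2 with h1 | h1
      · exact h1.2
      · exact h1.2.symm
    have hFac : F.IsAcyclic := by
      refine myIsAcyclic.mono ?_ hAc
      intro x y hxy
      rw [hFdef, fromRel_adj] at hxy
      rw [fromRel_adj]
      exact ⟨hxy.1, hxy.2.imp And.left And.left⟩
    -- sums
    rw [myPolyScore_eq B f]
    have hsub : ∑ p ∈ Finset.univ.filter (fun p : V × V => B p.1 p.2), f p.2 p.1 =
        ∑ p ∈ Finset.univ.filter (fun p : V × V => B' p.1 p.2), f p.2 p.1 := by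
      refine (Finset.sum_subset ?_ ?_).symm
      · intro p hp
        simp only [Finset.mem_filter, Finset.mem_univ, true_and] at hp ⊢
        exact hp.1
      · intro p hp hnp
        simp only [Finset.mem_filter, Finset.mem_univ, true_and] at hp hnp
        exact hf p.1 p.2 fun hadj => hnp ⟨hp, hadj⟩
    rw [hsub]
    have hle1 : ∑ p ∈ Finset.univ.filter (fun p : V × V => B' p.1 p.2), f p.2 p.1 ≤
        ∑ p ∈ Finset.univ.filter (fun p : V × V => B' p.1 p.2), w s(p.1, p.2) := by
      refine Finset.sum_le_sum fun p _ => ?_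
      rw [hw p.1 p.2]
      exact le_max_right _ _
    have himg : ∑ p ∈ Finset.univ.filter (fun p : V × V => B' p.1 p.2), w s(p.1, p.2) =
        ∑ e ∈ Finset.univ.filter (· ∈ F.edgeSet), w e := by
      rw [← myImage_eq B' hB',
        Finset.sum_image (fun x hx y hy hxy => myInjOn hB' hx hy hxy)]
    obtain ⟨T, hFT, hTG, hTtree⟩ := myExistsSpanning hG hFle hFac
    have hle2 : ∑ e ∈ Finset.univ.filter (· ∈ F.edgeSet), w e ≤ treeWeight T w := by
      rw [myTreeWeight_eq T w]
      refine Finset.sum_le_sum_of_subset ?_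
      intro e he
      simp only [Finset.mem_filter, Finset.mem_univ, true_and] at he ⊢
      exact edgeSet_mono hFT he
    calc ∑ p ∈ Finset.univ.filter (fun p : V × V => B' p.1 p.2), f p.2 p.1
        ≤ ∑ p ∈ Finset.univ.filter (fun p : V × V => B' p.1 p.2), w s(p.1, p.2) := hle1
      _ = ∑ e ∈ Finset.univ.filter (· ∈ F.edgeSet), w e := himg
      _ ≤ treeWeight T w := hle2
      _ ≤ treeWeight Tstar w := hmax T hTG hTtree
  · -- attainment
    set ev : V ≃ Fin (Fintype.card V) := Fintype.equivFin V with hev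
    set B : V → V → Prop := fun a b => Tstar.Adj a b ∧
      (f a b < f b a ∨ (f a b = f b a ∧ ev a < ev b)) with hBdef
    have hB : ∀ a b, B a b → ¬ B b a := by
      rintro a b ⟨_, h1⟩ ⟨_, h2⟩
      rcases h1 with h1 | ⟨h1, h1'⟩ <;> rcases h2 with h2 | ⟨h2, h2'⟩ <;>
        first
        | omega
        | exact absurd (h1'.trans h2') (lt_irrefl _)
    have hBT : SimpleGraph.fromRel B = Tstar := by
      ext x y
      rw [fromRel_adj]
      constructor
      · rintro ⟨hne, h | h⟩
        · exact h.1
        · exact h.1.symm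
      · intro hadj
        have hne : x ≠ y := hadj.ne
        have hev : ev x ≠ ev y := fun hh => hne (ev.injective hh)
        refine ⟨hne, ?_⟩
        rcases lt_trichotomy (f x y) (f y x) with h | h | h
        · exact Or.inl ⟨hadj, Or.inl h⟩
        · rcases lt_or_gt_of_ne hev with h' | h'
          · exact Or.inl ⟨hadj, Or.inr ⟨h, h'⟩⟩
          · exact Or.inr ⟨hadj.symm, Or.inr ⟨h.symm, h'⟩⟩
        · exact Or.inr ⟨hadj.symm, Or.inl h⟩
    refine ⟨B, hB, ?_, ?_⟩
    · rw [hBT]; exact hTree.2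
    · rw [myPolyScore_eq B f]
      have hcong : ∑ p ∈ Finset.univ.filter (fun p : V × V => B p.1 p.2), f p.2 p.1 =
          ∑ p ∈ Finset.univ.filter (fun p : V × V => B p.1 p.2), w s(p.1, p.2) := by
        refine Finset.sum_congr rfl fun p hp => ?_
        simp only [Finset.mem_filter, Finset.mem_univ, true_and] at hp
        rw [hw p.1 p.2]
        rcases hp.2 with h | ⟨h, _⟩
        · exact (max_eq_right h.le).symm
        · exact (max_eq_right h.le).symm
      rw [hcong]
      have himg : ∑ p ∈ Finset.univ.filter (fun p : V × V => B p.1 p.2), w s(p.1, p.2) =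
          ∑ e ∈ Finset.univ.filter (· ∈ (SimpleGraph.fromRel B).edgeSet), w e := by
        rw [← myImage_eq B hB,
          Finset.sum_image (fun x hx y hy hxy => myInjOn hB hx hy hxy)]
      rw [himg, myTreeWeight_eq Tstar w]
      congr 1
      ext e
      simp [hBT]
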